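/- Under the fixed effects ES model (φ = 0), if the prior standard deviation ω_p for SNP p is chosen as ω_p = K·ζ_p for a fixed constant K > 0, then ABF_fix^ES(ω_p) = (1+K²)^{−1/2}·exp((𝒯²_p/2)·K²/(1+K²)) is a strictly increasing function of 𝒯²_p not depending on ζ_p; hence ranking SNPs by ABF_fix^ES coincides with ranking by the test statistic 𝒯²_p. -/

import Mathlib

open Real

/-- Fixed-effects single-study approximate Bayes Factor with prior sd `ω`. -/
noncomputable def ABFfix (T2 zeta omega : ℝ) : ℝ :=
  Real.sqrt (zeta ^ 2 / (zeta ^ 2 + omega ^ 2)) *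
    Real.exp (T2 / 2 * (omega ^ 2 / (zeta ^ 2 + omega ^ 2)))

lemma ABFfix_eq (K : ℝ) (hK : 0 < K) (zeta T2 : ℝ) (hz : 0 < zeta) :
    ABFfix T2 zeta (K * zeta) =
      (1 + K ^ 2) ^ (-(1 / 2 : ℝ)) * Real.exp (T2 / 2 * (K ^ 2 / (1 + K ^ 2))) := by
  have h1 : (0:ℝ) < 1 + K ^ 2 := by positivity
  have hz2 : zeta ^ 2 ≠ 0 := by positivity
  have e1 : zeta ^ 2 + (K * zeta) ^ 2 = zeta ^ 2 * (1 + K ^ 2) := by ring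
  have e2 : zeta ^ 2 / (zeta ^ 2 + (K * zeta) ^ 2) = 1 / (1 + K ^ 2) := by
    rw [e1]; field_simp
  have e3 : (K * zeta) ^ 2 / (zeta ^ 2 + (K * zeta) ^ 2) = K ^ 2 / (1 + K ^ 2) := by
    rw [e1]; field_simp
  rw [ABFfix, e2, e3]
  congr 1
  rw [Real.rpow_neg h1.le, one_div, Real.sqrt_inv, Real.sqrt_eq_rpow]

/-- Implicit p-value prior (fixed effects): with `ω_p = K ζ_p`, the fixed-effects ABF
equals `(1+K²)^(−1/2)·exp((𝒯²/2)·K²/(1+K²))`, which does not depend on `ζ_p` and is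
strictly increasing in `𝒯²`; hence ABF and `𝒯²` rank SNPs identically. -/
theorem implicit_pvalue_prior_fixed_effects (K : ℝ) (hK : 0 < K) :
    (∀ zeta T2 : ℝ, 0 < zeta → 0 ≤ T2 →
      ABFfix T2 zeta (K * zeta) =
        (1 + K ^ 2) ^ (-(1 / 2 : ℝ)) * Real.exp (T2 / 2 * (K ^ 2 / (1 + K ^ 2)))) ∧
    (∀ zetap zetaq T2p T2q : ℝ, 0 < zetap → 0 < zetaq → 0 ≤ T2p → 0 ≤ T2q →
      (ABFfix T2p zetap (K * zetap) ≥ ABFfix T2q zetaq (K * zetaq) ↔ T2p ≥ T2q)) := by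
  constructor
  · intro zeta T2 hz _; exact ABFfix_eq K hK zeta T2 hz
  · intro zetap zetaq T2p T2q hzp hzq _ _
    rw [ABFfix_eq K hK zetap T2p hzp, ABFfix_eq K hK zetaq T2q hzq]
    have hc : (0:ℝ) < (1 + K ^ 2) ^ (-(1 / 2 : ℝ)) := by positivity
    have ha : (0:ℝ) < K ^ 2 / (1 + K ^ 2) := by positivity
    rw [ge_iff_le, mul_le_mul_iff_right₀ hc, Real.exp_le_exp, ge_iff_le]
    constructor
    · intro h
      have := (div_le_div_iff_of_pos_right (by norm_num : (0:ℝ)<2)).mp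
        ((mul_le_mul_iff_left₀ ha).mp h)
      linarith [this]
    · intro h
      have : T2q / 2 ≤ T2p / 2 := by linarith
      exact mul_le_mul_of_nonneg_right this ha.le
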